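/- In the quotient group B_3/(σ_i^4), the central element Δ_3^4 = (σ_1σ_2)^6 equals its own inverse, i.e., (σ_1σ_2)^{12} = 1 in B_3/(σ_i^4). -/

import Mathlib

lemma braid_four_pow12 {G : Type*} [Group G] (a b : G)
    (h1 : a * b * a = b * a * b) (h2 : a ^ 4 = 1) : (a * b) ^ 12 = 1 := by
  -- Δ-conjugation facts, Δ = a*b*a
  have hDa : (a * b * a) * a = b * (a * b * a) := by
    calc (a * b * a) * a = (b * a * b) * a := by rw [h1]
      _ = b * (a * b * a) := by group
  have hDb : (a * b * a) * b = a * (a * b * a) := by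
    calc (a * b * a) * b = a * (b * a * b) := by group
      _ = a * (a * b * a) := by rw [h1]
  -- b has order dividing 4
  have hb : b = (a * b * a) * a * (a * b * a)⁻¹ := by
    calc b = (b * a * b) * a * (a * b * a)⁻¹ := by group
      _ = (a * b * a) * a * (a * b * a)⁻¹ := by rw [h1]
  have hb4 : b ^ 4 = 1 := by
    rw [hb, conj_pow, h2]; group
  -- expanded order relations
  have h2' : a * a * a * a = 1 := by
    have t := h2
    rwa [show (4 : ℕ) = 3 + 1 from rfl, pow_succ,
      show (3 : ℕ) = 2 + 1 from rfl, pow_succ, pow_two] at t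
  have hb4' : b * b * b * b = 1 := by
    have t := hb4
    rwa [show (4 : ℕ) = 3 + 1 from rfl, pow_succ,
      show (3 : ℕ) = 2 + 1 from rfl, pow_succ, pow_two] at t
  have ha2 : a⁻¹ * a⁻¹ = a * a := by
    rw [← mul_one (a⁻¹ * a⁻¹), ← h2']; group; rw [zpow_two]
  have hb2 : b⁻¹ * b⁻¹ = b * b := by
    rw [← mul_one (b⁻¹ * b⁻¹), ← hb4']; group; rw [zpow_two]
  -- conjugation lemmas
  have L1 : a⁻¹ * b * a = b * a * b⁻¹ := by
    calc a⁻¹ * b * a = a⁻¹ * (b * a * b) * b⁻¹ := by group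
      _ = a⁻¹ * (a * b * a) * b⁻¹ := by rw [h1]
      _ = b * a * b⁻¹ := by group
  have L1sq : a⁻¹ * (b * b) * a = b * (a * a) * b⁻¹ := by
    calc a⁻¹ * (b * b) * a = (a⁻¹ * b * a) * (a⁻¹ * b * a) := by group
      _ = (b * a * b⁻¹) * (b * a * b⁻¹) := by rw [L1]
      _ = b * (a * a) * b⁻¹ := by group
  have L2 : b⁻¹ * a = a * b * a⁻¹ * b⁻¹ := by
    calc b⁻¹ * a = b⁻¹ * ((a * b * a) * (a⁻¹ * b⁻¹)) := by group
      _ = b⁻¹ * ((b * a * b) * (a⁻¹ * b⁻¹)) := by rw [h1]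
      _ = a * b * a⁻¹ * b⁻¹ := by group
  have L2c : a * b * a⁻¹ = b⁻¹ * (a * b) := by
    calc a * b * a⁻¹ = b⁻¹ * ((b * a * b) * a⁻¹) := by group
      _ = b⁻¹ * ((a * b * a) * a⁻¹) := by rw [h1]
      _ = b⁻¹ * (a * b) := by group
  -- T : a²ba²ba² = ba²b
  have T : (a * a) * b * (a * a) * b * (a * a) = b * (a * a) * b := by
    calc (a * a) * b * (a * a) * b * (a * a)
        = (a⁻¹ * a⁻¹) * b * (a * a) * b * (a⁻¹ * a⁻¹) := by rw [ha2]
      _ = a⁻¹ * (a⁻¹ * b * a) * ((a * b * a⁻¹) * a⁻¹) := by group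
      _ = a⁻¹ * (b * a * b⁻¹) * ((b⁻¹ * (a * b)) * a⁻¹) := by rw [L1, L2c]
      _ = a⁻¹ * (b * a) * (b⁻¹ * b⁻¹) * (a * b) * a⁻¹ := by group
      _ = a⁻¹ * (b * a) * (b * b) * (a * b) * a⁻¹ := by rw [hb2]
      _ = a⁻¹ * (b * a * b) * ((b * a * b) * a⁻¹) := by group
      _ = a⁻¹ * (a * b * a) * ((a * b * a) * a⁻¹) := by rw [h1]
      _ = b * (a * a) * b := by group
  -- c = (ab)^3 = Δ² and its normal forms
  have hpow3 : (a * b) ^ 3 = (a * b) * (a * b) * (a * b) := by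
    rw [show (3 : ℕ) = 2 + 1 from rfl, pow_succ, pow_two]
  have hD : (a * b) ^ 3 = (a * a) * b * ((a * a) * b) := by
    calc (a * b) ^ 3 = (a * b) * (a * b) * (a * b) := hpow3
      _ = a * (b * a * b) * (a * b) := by group
      _ = a * (a * b * a) * (a * b) := by rw [h1]
      _ = (a * a) * b * ((a * a) * b) := by group
  have hDD : (a * b) ^ 3 = (a * b * a) * (a * b * a) := by
    calc (a * b) ^ 3 = (a * b) * (a * b) * (a * b) := hpow3
      _ = (a * b * a) * (b * a * b) := by group
      _ = (a * b * a) * (a * b * a) := by rw [h1]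
  -- centrality of c
  have ca : (a * b) ^ 3 * a = a * (a * b) ^ 3 := by
    calc (a * b) ^ 3 * a = (a * b * a) * (a * b * a) * a := by rw [hDD]
      _ = (a * b * a) * ((a * b * a) * a) := by group
      _ = (a * b * a) * (b * (a * b * a)) := by rw [hDa]
      _ = ((a * b * a) * b) * (a * b * a) := by group
      _ = (a * (a * b * a)) * (a * b * a) := by rw [hDb]
      _ = a * ((a * b * a) * (a * b * a)) := by group
      _ = a * (a * b) ^ 3 := by rw [hDD]
  have cb : (a * b) ^ 3 * b = b * (a * b) ^ 3 := by
    calc (a * b) ^ 3 * b = (a * b * a) * (a * b * a) * b := by rw [hDD]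
      _ = (a * b * a) * ((a * b * a) * b) := by group
      _ = (a * b * a) * (a * (a * b * a)) := by rw [hDb]
      _ = ((a * b * a) * a) * (a * b * a) := by group
      _ = (b * (a * b * a)) * (a * b * a) := by rw [hDa]
      _ = b * ((a * b * a) * (a * b * a)) := by group
      _ = b * (a * b) ^ 3 := by rw [hDD]
  have Ca : Commute ((a * b) ^ 3) a := ca
  have Cb : Commute ((a * b) ^ 3) b := cb
  have CD : Commute ((a * b) ^ 3) (a * b * a) := (Ca.mul_right Cb).mul_right Ca
  -- c² = b (a²b²a²) b
  have C2 : ((a * b) ^ 3) * ((a * b) ^ 3) = b * ((a * a) * (b * b) * (a * a)) * b := by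
    calc ((a * b) ^ 3) * ((a * b) ^ 3)
        = ((a * a) * b * ((a * a) * b)) * ((a * a) * b * ((a * a) * b)) := by rw [hD]
      _ = ((a * a) * b * (a * a) * b * (a * a)) * (b * (a * a) * b) := by group
      _ = (b * (a * a) * b) * (b * (a * a) * b) := by rw [T]
      _ = b * ((a * a) * (b * b) * (a * a)) * b := by group
  -- c² = a²b²a²b²
  have C4 : ((a * b) ^ 3) ^ 2 = (a * a) * (b * b) * (a * a) * (b * b) := by
    have h := (Cb.pow_left 2).eq
    calc ((a * b) ^ 3) ^ 2 = b⁻¹ * (b * ((a * b) ^ 3) ^ 2) := by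
          rw [inv_mul_cancel_left]
      _ = b⁻¹ * (((a * b) ^ 3) ^ 2 * b) := by rw [h]
      _ = b⁻¹ * ((((a * b) ^ 3) * ((a * b) ^ 3)) * b) := by rw [pow_two]
      _ = b⁻¹ * ((b * ((a * a) * (b * b) * (a * a)) * b) * b) := by rw [C2]
      _ = (a * a) * (b * b) * (a * a) * (b * b) := by group
  -- (ab⁻¹)³ = a²b²a²b²
  have C6 : (a * b⁻¹) ^ 3 = (a * a) * (b * b) * (a * a) * (b * b) := by
    calc (a * b⁻¹) ^ 3 = (a * b⁻¹) * (a * b⁻¹) * (a * b⁻¹) := by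
          rw [show (3 : ℕ) = 2 + 1 from rfl, pow_succ, pow_two]
      _ = a * (b⁻¹ * a) * (b⁻¹ * (a * b⁻¹)) := by group
      _ = a * (a * b * a⁻¹ * b⁻¹) * (b⁻¹ * (a * b⁻¹)) := by rw [L2]
      _ = (a * a) * b * a⁻¹ * (b⁻¹ * b⁻¹) * (a * b⁻¹) := by group
      _ = (a * a) * b * a⁻¹ * (b * b) * (a * b⁻¹) := by rw [hb2]
      _ = (a * a) * b * (a⁻¹ * (b * b) * a) * b⁻¹ := by group
      _ = (a * a) * b * (b * (a * a) * b⁻¹) * b⁻¹ := by rw [L1sq]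
      _ = (a * a) * (b * b) * (a * a) * (b⁻¹ * b⁻¹) := by group
      _ = (a * a) * (b * b) * (a * a) * (b * b) := by rw [hb2]
  have key : ((a * b) ^ 3) ^ 2 = (a * b⁻¹) ^ 3 := C4.trans C6.symm
  -- Δ inverts a*b⁻¹
  have hDbi : (a * b * a) * b⁻¹ = a⁻¹ * (a * b * a) := by
    calc (a * b * a) * b⁻¹ = a⁻¹ * ((a * (a * b * a)) * b⁻¹) := by group
      _ = a⁻¹ * (((a * b * a) * b) * b⁻¹) := by rw [← hDb]
      _ = a⁻¹ * (a * b * a) := by group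
  have hconj : (a * b * a) * (a * b⁻¹) * (a * b * a)⁻¹ = (a * b⁻¹)⁻¹ := by
    calc (a * b * a) * (a * b⁻¹) * (a * b * a)⁻¹
        = (((a * b * a) * a) * (a * b * a)⁻¹) * (((a * b * a) * b⁻¹) * (a * b * a)⁻¹) := by
          group
      _ = ((b * (a * b * a)) * (a * b * a)⁻¹) * ((a⁻¹ * (a * b * a)) * (a * b * a)⁻¹) := by
          rw [hDa, hDbi]
      _ = (a * b⁻¹)⁻¹ := by group
  -- conjugation by Δ fixes c² but inverts (ab⁻¹)³
  have hcent : (a * b * a) * ((a * b) ^ 3) ^ 2 * (a * b * a)⁻¹ = ((a * b) ^ 3) ^ 2 := by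
    rw [← (CD.pow_left 2).eq]
    exact mul_inv_cancel_right _ _
  have hinv : ((a * b) ^ 3) ^ 2 = (((a * b) ^ 3) ^ 2)⁻¹ := by
    calc ((a * b) ^ 3) ^ 2
        = (a * b * a) * ((a * b) ^ 3) ^ 2 * (a * b * a)⁻¹ := by rw [hcent]
      _ = (a * b * a) * (a * b⁻¹) ^ 3 * (a * b * a)⁻¹ := by rw [key]
      _ = ((a * b * a) * (a * b⁻¹) * (a * b * a)⁻¹) ^ 3 := by rw [conj_pow]
      _ = ((a * b⁻¹)⁻¹) ^ 3 := by rw [hconj]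
      _ = ((a * b⁻¹) ^ 3)⁻¹ := by rw [inv_pow]
      _ = (((a * b) ^ 3) ^ 2)⁻¹ := by rw [key]
  calc (a * b) ^ 12 = ((a * b) ^ 3) ^ 4 := by rw [← pow_mul]
    _ = ((a * b) ^ 3) ^ 2 * ((a * b) ^ 3) ^ 2 := by rw [← pow_add]
    _ = ((a * b) ^ 3) ^ 2 * (((a * b) ^ 3) ^ 2)⁻¹ := by rw [← hinv]
    _ = 1 := mul_inv_cancel _

/-- The braid relation of `B₃`: `σ₁σ₂σ₁ = σ₂σ₁σ₂`. -/
def braidRel3 : FreeGroup (Fin 2) :=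
  FreeGroup.of 0 * FreeGroup.of 1 * FreeGroup.of 0 *
    (FreeGroup.of 1 * FreeGroup.of 0 * FreeGroup.of 1)⁻¹

/-- Relations presenting `B₃/(σᵢ⁴)`. -/
def rels3_4 : Set (FreeGroup (Fin 2)) := {braidRel3, (FreeGroup.of 0) ^ 4}

/-- In `B₃/(σᵢ⁴)`, the central element `Δ₃⁴ = (σ₁σ₂)⁶` is its own inverse:
`(σ₁σ₂)¹² = 1`. -/
theorem delta_four_involutive :
    ((PresentedGroup.of (rels := rels3_4) 0 * PresentedGroup.of 1) ^ 12 :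
        PresentedGroup rels3_4) = 1 := by
  have key : ∀ r ∈ rels3_4, (QuotientGroup.mk r : PresentedGroup rels3_4) = 1 := by
    intro r hr
    exact (QuotientGroup.eq_one_iff r).mpr (Subgroup.subset_normalClosure hr)
  have h1 : (PresentedGroup.of (rels := rels3_4) 0 * PresentedGroup.of 1 * PresentedGroup.of 0 :
      PresentedGroup rels3_4) =
      PresentedGroup.of 1 * PresentedGroup.of 0 * PresentedGroup.of 1 := by
    have := key braidRel3 (Or.inl rfl)
    rw [braidRel3] at this
    rw [← mul_inv_eq_one]
    simp [PresentedGroup.of, QuotientGroup.mk_mul, QuotientGroup.mk_inv] at this ⊢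
    exact this
  have h2 : (PresentedGroup.of (rels := rels3_4) 0 : PresentedGroup rels3_4) ^ 4 = 1 := by
    have := key ((FreeGroup.of 0) ^ 4) (Or.inr rfl)
    simp [PresentedGroup.of, QuotientGroup.mk_pow] at this ⊢
    exact this
  exact braid_four_pow12 _ _ h1 h2
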